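/- If B is an equationally Noetherian L-algebra, then every algebraic set Y ⊆ Bⁿ is a finite union of irreducible algebraic sets Y = Y₁ ∪ ... ∪ Y_m, and if Y_i ⊄ Y_j for i ≠ j this decomposition is unique up to permutation of the components. -/

import Mathlib

open FirstOrder Language Structure

universe u

namespace UAG

variable {L : FirstOrder.Language}

/-- The algebraic set `V_B(S)` defined in `B` by a system `S` of equations in `n` variables. -/
def solSet (B : Type u) [L.Structure B] {n : ℕ}
    (S : Set (L.Term (Fin n) × L.Term (Fin n))) : Set (Fin n → B) :=
  {x | ∀ p ∈ S, p.1.realize x = p.2.realize x}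

/-- A subset of `Bⁿ` is algebraic if it is the solution set of a system of equations. -/
def IsAlgebraicSet (B : Type u) [L.Structure B] {n : ℕ} (Y : Set (Fin n → B)) : Prop :=
  ∃ S : Set (L.Term (Fin n) × L.Term (Fin n)), Y = solSet B S

/-- An algebraic set is irreducible if it is not a finite union of proper algebraic subsets. -/
def IsIrreducibleAlgSet (B : Type u) [L.Structure B] {n : ℕ} (Y : Set (Fin n → B)) : Prop :=
  IsAlgebraicSet (L := L) B Y ∧
    ∀ s : Finset (Set (Fin n → B)),
      (∀ Z ∈ s, IsAlgebraicSet (L := L) B Z ∧ Z ⊂ Y) → Y ≠ ⋃₀ ↑s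

section Aux

variable (B : Type u) [L.Structure B] {n : ℕ}

def idealOf (Y : Set (Fin n → B)) : Set (L.Term (Fin n) × L.Term (Fin n)) :=
  {p | ∀ x ∈ Y, p.1.realize x = p.2.realize x}

lemma solSet_anti {S T : Set (L.Term (Fin n) × L.Term (Fin n))} (h : S ⊆ T) :
    solSet B T ⊆ solSet B S := fun x hx p hp => hx p (h hp)

lemma subset_solSet_idealOf (Y : Set (Fin n → B)) : Y ⊆ solSet B (idealOf (L := L) B Y) :=
  fun x hx p hp => hp x hx

lemma solSet_idealOf {Y : Set (Fin n → B)} (hY : IsAlgebraicSet (L := L) B Y) :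
    solSet B (idealOf (L := L) B Y) = Y := by
  obtain ⟨S, rfl⟩ := hY
  refine Set.Subset.antisymm (solSet_anti B (fun p hp x hx => hx p hp)) (subset_solSet_idealOf B _)

lemma idealOf_anti {Y Z : Set (Fin n → B)} (h : Y ⊆ Z) :
    idealOf (L := L) B Z ⊆ idealOf B Y := fun p hp x hx => hp x (h hx)

lemma isAlgebraicSet_inter {Y Z : Set (Fin n → B)}
    (hY : IsAlgebraicSet (L := L) B Y) (hZ : IsAlgebraicSet (L := L) B Z) :
    IsAlgebraicSet (L := L) B (Y ∩ Z) := by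
  obtain ⟨S, rfl⟩ := hY
  obtain ⟨T, rfl⟩ := hZ
  refine ⟨S ∪ T, ?_⟩
  ext x
  constructor
  · rintro ⟨hx1, hx2⟩ p hp
    rcases hp with hp | hp
    · exact hx1 p hp
    · exact hx2 p hp
  · exact fun hx => ⟨fun p hp => hx p (Or.inl hp), fun p hp => hx p (Or.inr hp)⟩

/-- Well-foundedness of strict inclusion on algebraic sets. -/
lemma wf_algSet
    (hnoeth : ∀ (S : Set (L.Term (Fin n) × L.Term (Fin n))),
      ∃ S₀ : Set (L.Term (Fin n) × L.Term (Fin n)),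
        S₀ ⊆ S ∧ S₀.Finite ∧ solSet B S₀ = solSet B S) :
    WellFounded (fun (Y Z : {Y : Set (Fin n → B) // IsAlgebraicSet (L := L) B Y}) =>
      Y.1 ⊂ Z.1) := by
  classical
  haveI : IsStrictOrder {Y : Set (Fin n → B) // IsAlgebraicSet (L := L) B Y}
      (fun Y Z => Y.1 ⊂ Z.1) :=
    { irrefl := fun a => ssubset_irrefl a.1
      trans := fun _ _ _ h1 h2 => ssubset_trans h1 h2 }
  rw [RelEmbedding.wellFounded_iff_isEmpty]
  constructor
  rintro f
  have hdesc : ∀ k : ℕ, (f (k + 1)).1 ⊂ (f k).1 := fun k =>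
    f.map_rel_iff.2 (Nat.lt_succ_self k)
  have hanti : Antitone (fun k => (f k).1) :=
    antitone_nat_of_succ_le (fun k => (hdesc k).1)
  obtain ⟨S₀, hS₀sub, hS₀fin, hS₀sol⟩ := hnoeth (⋃ k, idealOf (L := L) B (f k).1)
  -- every p ∈ S₀ lies in some idealOf (f k); take max over finite set
  have hex : ∀ p ∈ S₀, ∃ k, p ∈ idealOf (L := L) B (f k).1 := by
    intro p hp
    simpa using hS₀sub hp
  choose g hg using hex
  obtain ⟨N, hN⟩ := (hS₀fin.image (fun p => if hp : p ∈ S₀ then g p hp else 0)).bddAbove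
  have hgN : ∀ p (hp : p ∈ S₀), g p hp ≤ N := by
    intro p hp
    have := hN (Set.mem_image_of_mem _ hp)
    simpa [dif_pos hp] using this
  have hS₀N : S₀ ⊆ idealOf (L := L) B (f N).1 := by
    intro p hp
    exact idealOf_anti B (hanti (hgN p hp)) (hg p hp)
  have h1 : (f N).1 ⊆ (f (N + 1)).1 := by
    calc (f N).1 = solSet B (idealOf (L := L) B (f N).1) := (solSet_idealOf B (f N).2).symm
    _ ⊆ solSet B S₀ := solSet_anti B hS₀N
    _ = solSet B (⋃ k, idealOf (L := L) B (f k).1) := hS₀sol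
    _ ⊆ solSet B (idealOf (L := L) B (f (N + 1)).1) :=
        solSet_anti B (Set.subset_iUnion (fun k => idealOf (L := L) B (f k).1) (N + 1))
    _ = (f (N + 1)).1 := solSet_idealOf B (f (N + 1)).2
  exact (hdesc N).2 h1


lemma irreducible_subset_union {Z : Set (Fin n → B)} (hZ : IsIrreducibleAlgSet (L := L) B Z)
    {s : Finset (Set (Fin n → B))} (halg : ∀ W ∈ s, IsAlgebraicSet (L := L) B W)
    (hsub : Z ⊆ ⋃₀ ↑s) : ∃ W ∈ s, Z ⊆ W := by
  classical
  by_contra h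
  push_neg at h
  refine hZ.2 (s.image (fun W => Z ∩ W)) ?_ ?_
  · intro W hW
    obtain ⟨W', hW', rfl⟩ := Finset.mem_image.1 hW
    refine ⟨isAlgebraicSet_inter B hZ.1 (halg W' hW'), Set.inter_subset_left, ?_⟩
    intro hle
    exact h W' hW' (fun x hx => (hle hx).2)
  · ext x
    simp only [Finset.coe_image, Set.mem_sUnion, Set.mem_image, Finset.mem_coe]
    constructor
    · intro hx
      obtain ⟨W, hW, hxW⟩ := hsub hx
      exact ⟨Z ∩ W, ⟨W, hW, rfl⟩, hx, hxW⟩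
    · rintro ⟨_, ⟨W, hW, rfl⟩, hx, _⟩
      exact hx

lemma exists_decomposition
    (hnoeth : ∀ (S : Set (L.Term (Fin n) × L.Term (Fin n))),
      ∃ S₀ : Set (L.Term (Fin n) × L.Term (Fin n)),
        S₀ ⊆ S ∧ S₀.Finite ∧ solSet B S₀ = solSet B S)
    {Y : Set (Fin n → B)} (hY : IsAlgebraicSet (L := L) B Y) :
    ∃ s : Finset (Set (Fin n → B)),
      (∀ Z ∈ s, IsIrreducibleAlgSet (L := L) B Z) ∧ Y = ⋃₀ ↑s := by
  classical
  suffices h : ∀ Y' : {Y : Set (Fin n → B) // IsAlgebraicSet (L := L) B Y},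
      ∃ s : Finset (Set (Fin n → B)),
        (∀ Z ∈ s, IsIrreducibleAlgSet (L := L) B Z) ∧ Y'.1 = ⋃₀ ↑s by
    exact h ⟨Y, hY⟩
  intro Y'
  induction Y' using (wf_algSet B hnoeth).induction with
  | _ Y' ih =>
  by_cases hirr : IsIrreducibleAlgSet (L := L) B Y'.1
  · exact ⟨{Y'.1}, by simpa using hirr, by simp⟩
  · have h2 : ¬ ∀ s : Finset (Set (Fin n → B)),
        (∀ Z ∈ s, IsAlgebraicSet (L := L) B Z ∧ Z ⊂ Y'.1) → Y'.1 ≠ ⋃₀ ↑s :=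
      fun hall => hirr ⟨Y'.2, hall⟩
    push_neg at h2
    obtain ⟨s, hs, hsY⟩ := h2
    have hch : ∀ Z ∈ s, ∃ t : Finset (Set (Fin n → B)),
        (∀ W ∈ t, IsIrreducibleAlgSet (L := L) B W) ∧ Z = ⋃₀ ↑t := by
      intro Z hZ
      exact ih ⟨Z, (hs Z hZ).1⟩ ((hs Z hZ).2)
    choose! t ht using hch
    refine ⟨s.biUnion t, ?_, ?_⟩
    · intro W hW
      obtain ⟨Z, hZ, hWt⟩ := Finset.mem_biUnion.1 hW
      exact (ht Z hZ).1 W hWt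
    · rw [hsY]
      ext x
      simp only [Set.mem_sUnion, Finset.coe_biUnion, Set.mem_iUnion, Finset.mem_coe]
      constructor
      · rintro ⟨Z, hZ, hxZ⟩
        have := (ht Z hZ).2 ▸ hxZ
        obtain ⟨W, hW, hxW⟩ := this
        exact ⟨W, ⟨Z, hZ, hW⟩, hxW⟩
      · rintro ⟨W, ⟨Z, hZ, hW⟩, hxW⟩
        refine ⟨Z, hZ, ?_⟩
        rw [(ht Z hZ).2]
        exact ⟨W, hW, hxW⟩

lemma prune (s : Finset (Set (Fin n → B))) {Y : Set (Fin n → B)}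
    (hirr : ∀ Z ∈ s, IsIrreducibleAlgSet (L := L) B Z) (hY : Y = ⋃₀ ↑s) :
    ∃ s' : Finset (Set (Fin n → B)),
      (∀ Z ∈ s', IsIrreducibleAlgSet (L := L) B Z) ∧ Y = ⋃₀ ↑s' ∧
      (∀ Z₁ ∈ s', ∀ Z₂ ∈ s', Z₁ ⊆ Z₂ → Z₁ = Z₂) := by
  classical
  refine ⟨s.filter (fun Z => ∀ W ∈ s, Z ⊆ W → Z = W), ?_, ?_, ?_⟩
  · intro Z hZ
    exact hirr Z (Finset.mem_of_mem_filter Z hZ)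
  · apply Set.Subset.antisymm
    · intro x hx
      rw [hY] at hx
      obtain ⟨Z, hZ, hxZ⟩ := hx
      obtain ⟨W, ⟨hWs, hZW⟩, hmax⟩ :=
        Set.Finite.exists_maximalFor id {W | W ∈ s ∧ Z ⊆ W}
          (s.finite_toSet.subset (fun W hW => hW.1)) ⟨Z, hZ, subset_rfl⟩
      refine Set.mem_sUnion.2 ⟨W, ?_, hZW hxZ⟩
      simp only [Finset.coe_filter, Set.mem_setOf_eq]
      exact ⟨hWs, fun W' hW' hWW' => Set.Subset.antisymm hWW' (hmax ⟨hW', hZW.trans hWW'⟩ hWW')⟩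
    · intro x hx
      obtain ⟨Z, hZ, hxZ⟩ := hx
      rw [hY]
      exact ⟨Z, Finset.mem_coe.2 (Finset.mem_of_mem_filter Z (Finset.mem_coe.1 hZ)), hxZ⟩
  · intro Z₁ hZ₁ Z₂ hZ₂ hsub
    have h1 := (Finset.mem_filter.1 hZ₁).2
    exact h1 Z₂ (Finset.mem_of_mem_filter Z₂ hZ₂) hsub

lemma unique_decomposition {Y : Set (Fin n → B)} {s t : Finset (Set (Fin n → B))}
    (hs : ∀ Z ∈ s, IsIrreducibleAlgSet (L := L) B Z) (hsY : Y = ⋃₀ ↑s)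
    (hsa : ∀ Z₁ ∈ s, ∀ Z₂ ∈ s, Z₁ ⊆ Z₂ → Z₁ = Z₂)
    (ht : ∀ Z ∈ t, IsIrreducibleAlgSet (L := L) B Z) (htY : Y = ⋃₀ ↑t)
    (hta : ∀ Z₁ ∈ t, ∀ Z₂ ∈ t, Z₁ ⊆ Z₂ → Z₁ = Z₂) : t = s := by
  have key : ∀ (u v : Finset (Set (Fin n → B))),
      (∀ Z ∈ u, IsIrreducibleAlgSet (L := L) B Z) → Y = ⋃₀ ↑u →
      (∀ Z₁ ∈ u, ∀ Z₂ ∈ u, Z₁ ⊆ Z₂ → Z₁ = Z₂) →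
      (∀ Z ∈ v, IsIrreducibleAlgSet (L := L) B Z) → Y = ⋃₀ ↑v → u ⊆ v := by
    intro u v hu huY hua hv hvY
    intro Z hZ
    have hZY : Z ⊆ Y := huY ▸ fun x hx => Set.mem_sUnion.2 ⟨Z, hZ, hx⟩
    obtain ⟨W, hW, hZW⟩ := irreducible_subset_union B (hu Z hZ)
      (fun W hW => (hv W hW).1) (hvY ▸ hZY)
    have hWY : W ⊆ Y := hvY ▸ fun x hx => Set.mem_sUnion.2 ⟨W, hW, hx⟩
    obtain ⟨Z', hZ', hWZ'⟩ := irreducible_subset_union B (hv W hW)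
      (fun W' hW' => (hu W' hW').1) (huY ▸ hWY)
    have hZZ' : Z = Z' := hua Z hZ Z' hZ' (hZW.trans hWZ')
    have : Z = W := Set.Subset.antisymm hZW (hZZ' ▸ hWZ')
    exact this ▸ hW
  exact Finset.Subset.antisymm
    (key t s ht htY hta hs hsY)
    (key s t hs hsY hsa ht htY)

end Aux

/-- If `B` is an equationally Noetherian `L`-algebra, then every algebraic set
`Y ⊆ Bⁿ` is a finite union of irreducible algebraic sets, and an irredundant such decomposition
is unique up to permutation of the components. -/
theorem irreducible_decomposition
    (B : Type u) [L.Structure B]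
    (hnoeth : ∀ (n : ℕ) (S : Set (L.Term (Fin n) × L.Term (Fin n))),
      ∃ S₀ : Set (L.Term (Fin n) × L.Term (Fin n)),
        S₀ ⊆ S ∧ S₀.Finite ∧ solSet B S₀ = solSet B S)
    (n : ℕ) (Y : Set (Fin n → B)) (hY : IsAlgebraicSet (L := L) B Y) :
    ∃ s : Finset (Set (Fin n → B)),
      (∀ Z ∈ s, IsIrreducibleAlgSet (L := L) B Z) ∧
      Y = ⋃₀ ↑s ∧
      (∀ Z₁ ∈ s, ∀ Z₂ ∈ s, Z₁ ⊆ Z₂ → Z₁ = Z₂) ∧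
      (∀ t : Finset (Set (Fin n → B)),
        (∀ Z ∈ t, IsIrreducibleAlgSet (L := L) B Z) →
        Y = ⋃₀ ↑t → (∀ Z₁ ∈ t, ∀ Z₂ ∈ t, Z₁ ⊆ Z₂ → Z₁ = Z₂) → t = s) := by
  obtain ⟨s₀, hs₀irr, hs₀Y⟩ := exists_decomposition B (hnoeth n) hY
  obtain ⟨s, hsirr, hsY, hsa⟩ := prune B s₀ hs₀irr hs₀Y
  exact ⟨s, hsirr, hsY, hsa, fun t htirr htY hta =>
    unique_decomposition B hsirr hsY hsa htirr htY hta⟩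

end UAG
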